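/- Let A ∈ ℝ^{n×n} be a real matrix with n even that is not normal and has real normal defect 1, i.e., admits a real normal (n+1)×(n+1) completion. Then there exist a real contraction C ∈ ℝ^{n×n} admitting an orthogonal completion of size (n+1)×(n+1), a real block-diagonal matrix D consisting of 2×2 blocks of the form [[α,β],[−β,α]] and real scalar diagonal entries, and μ ∈ ℝ, such that A = C D Cᵀ + μ I. Conversely any such A that is not normal has real normal defect 1. -/

import Mathlib

open Matrix
open scoped ComplexOrder

lemma normal_conjT_mulVec {m : ℕ} (N : Matrix (Fin m) (Fin m) ℂ)
    (hN : Nᴴ * N = N * Nᴴ) (μ : ℂ) (z : Fin m → ℂ) (hz : N *ᵥ z = μ • z) :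
    Nᴴ *ᵥ z = (star μ) • z := by
  set P := N - μ • 1 with hP
  have hPz : P *ᵥ z = 0 := by
    simp [hP, sub_mulVec, hz, smul_mulVec]
  have hPH : Pᴴ = Nᴴ - (star μ) • 1 := by
    simp [hP, conjTranspose_sub, conjTranspose_smul]
  have hPnormal : P * Pᴴ = Pᴴ * P := by
    rw [hPH, hP]
    simp only [sub_mul, mul_sub, smul_mul_assoc, mul_smul_comm, mul_one, one_mul]
    rw [hN, smul_sub, smul_sub, smul_smul, smul_smul, mul_comm]
    abel
  have key : star (Pᴴ *ᵥ z) ⬝ᵥ (Pᴴ *ᵥ z) = 0 := by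
    rw [star_mulVec, conjTranspose_conjTranspose, ← dotProduct_mulVec,
      mulVec_mulVec, hPnormal, ← mulVec_mulVec, hPz, mulVec_zero, dotProduct_zero]
  have hw : Pᴴ *ᵥ z = 0 := dotProduct_star_self_eq_zero.mp key
  rw [hPH, sub_mulVec, smul_mulVec, one_mulVec, sub_eq_zero] at hw
  exact hw

lemma ext_orthogonal {m r : ℕ} (f : Fin r → (Fin m → ℝ)) (pos : Fin r → Fin m)
    (hpos : Function.Injective pos)
    (horth : ∀ a b : Fin r, f a ⬝ᵥ f b = if a = b then 1 else 0) :
    ∃ U : Matrix (Fin m) (Fin m) ℝ, Uᵀ * U = 1 ∧ ∀ a i, U i (pos a) = f a i := by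
  classical
  set E := EuclideanSpace ℝ (Fin m)
  let v : Fin m → E := fun j => if h : ∃ a, pos a = j then WithLp.toLp 2 (f h.choose) else 0
  have hv : ∀ a : Fin r, v (pos a) = f a := by
    intro a
    have h : ∃ a', pos a' = pos a := ⟨a, rfl⟩
    have : h.choose = a := hpos h.choose_spec
    simp only [v, dif_pos h, this, WithLp.ofLp_toLp]
  have hinner : ∀ x y : E, (inner ℝ x y : ℝ) = ∑ i, x i * y i := by
    intro x y
    rw [PiLp.inner_apply]
    simp [RCLike.inner_apply]
    exact Finset.sum_congr rfl fun i _ => mul_comm _ _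
  have hres : Orthonormal ℝ ((Set.range pos).restrict v) := by
    rw [orthonormal_iff_ite]
    rintro ⟨i, a, rfl⟩ ⟨j, b, rfl⟩
    rw [hinner]
    change ∑ i, (v (pos a)).ofLp i * (v (pos b)).ofLp i = _
    simp only [Set.restrict_apply, hv]
    have := horth a b
    rw [dotProduct] at this
    rw [this]
    by_cases hab : a = b
    · simp [hab]
    · have : pos a ≠ pos b := fun h => hab (hpos h)
      simp [hab, Subtype.ext_iff, this]
  obtain ⟨b, hb⟩ := Orthonormal.exists_orthonormalBasis_extension_of_card_eq
    (𝕜 := ℝ) (E := E) (by simp [E, finrank_euclideanSpace]) hres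
  refine ⟨Matrix.of fun i j => b j i, ?_, ?_⟩
  · ext a c
    have := b.orthonormal
    rw [orthonormal_iff_ite] at this
    have h2 := this a c
    rw [hinner] at h2
    simp only [Matrix.mul_apply, Matrix.transpose_apply, Matrix.of_apply, Matrix.one_apply]
    rw [← h2]
  · intro a i
    have : b (pos a) = v (pos a) := hb _ ⟨a, rfl⟩
    simp only [Matrix.of_apply, this, hv]

lemma exists_eigen_real {m : ℕ} (hm : 0 < m) (B : Matrix (Fin m) (Fin m) ℝ)
    (hB : Bᵀ * B = B * Bᵀ) :
    (∃ (α : ℝ) (v : Fin m → ℝ), v ⬝ᵥ v = 1 ∧ B *ᵥ v = α • v ∧ Bᵀ *ᵥ v = α • v) ∨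
    (∃ (α β : ℝ) (e f : Fin m → ℝ), e ⬝ᵥ e = 1 ∧ f ⬝ᵥ f = 1 ∧ e ⬝ᵥ f = 0 ∧
      B *ᵥ e = α • e + β • f ∧ B *ᵥ f = (-β) • e + α • f ∧
      Bᵀ *ᵥ e = α • e - β • f ∧ Bᵀ *ᵥ f = β • e + α • f) := by
  classical
  set N : Matrix (Fin m) (Fin m) ℂ := B.map (Complex.ofRealHom) with hNdef
  have hNH : Nᴴ = (Bᵀ).map Complex.ofRealHom := by
    ext i j
    simp [hNdef, conjTranspose_apply, Complex.conj_ofReal]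
  have hNnorm : Nᴴ * N = N * Nᴴ := by
    rw [hNH, hNdef, ← Matrix.map_mul, ← Matrix.map_mul, hB]
  haveI : Nonempty (Fin m) := ⟨⟨0, hm⟩⟩
  haveI : Nontrivial (Fin m → ℂ) := Function.nontrivial
  obtain ⟨μ, hμ⟩ := Module.End.exists_eigenvalue (Matrix.toLin' N)
  obtain ⟨z, hz⟩ := hμ.exists_hasEigenvector
  have hzval : N *ᵥ z = μ • z := by
    have := hz.apply_eq_smul
    rwa [Matrix.toLin'_apply] at this
  have hz0 : z ≠ 0 := hz.right
  have hzT : Nᵀ *ᵥ z = (star μ) • z := by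
    have h0 : Nᵀ = Bᵀ.map Complex.ofRealHom := by ext i j; simp [hNdef]
    have := normal_conjT_mulVec N hNnorm μ z hzval
    rwa [hNH, ← h0] at this
  -- real components
  set x : Fin m → ℝ := fun i => (z i).re with hx
  set y : Fin m → ℝ := fun i => (z i).im with hy
  set α := μ.re
  set β := μ.im
  have hzi : ∀ i, (N *ᵥ z) i = ∑ j, (B i j : ℂ) * z j := by
    intro i; simp [hNdef, mulVec, dotProduct]
  have hziT : ∀ i, (Nᵀ *ᵥ z) i = ∑ j, (B j i : ℂ) * z j := by
    intro i; simp [hNdef, mulVec, dotProduct, transpose_apply]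
  have hBx : B *ᵥ x = α • x - β • y := by
    ext i
    have h1 := congrArg Complex.re ((hzi i).symm.trans (congrFun hzval i))
    simp only [Complex.re_sum, Complex.mul_re, Complex.ofReal_re, Complex.ofReal_im,
      zero_mul, sub_zero, Pi.smul_apply, smul_eq_mul, Complex.mul_re] at h1
    simpa [mulVec, dotProduct, hx, hy, mul_comm] using h1
  have hBy : B *ᵥ y = β • x + α • y := by
    ext i
    have h1 := congrArg Complex.im ((hzi i).symm.trans (congrFun hzval i))
    simp only [Complex.im_sum, Complex.mul_im, Complex.ofReal_re, Complex.ofReal_im,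
      zero_mul, add_zero, Pi.smul_apply, smul_eq_mul] at h1
    simp only [mulVec, dotProduct, hx, hy, Pi.add_apply, Pi.smul_apply, smul_eq_mul]
    linarith [h1]
  have hBTx : Bᵀ *ᵥ x = α • x + β • y := by
    ext i
    have h1 := congrArg Complex.re ((hziT i).symm.trans (congrFun hzT i))
    simp only [Complex.re_sum, Complex.mul_re, Complex.ofReal_re, Complex.ofReal_im,
      zero_mul, sub_zero, Pi.smul_apply, smul_eq_mul, Complex.star_def,
      Complex.conj_re, Complex.conj_im] at h1
    simpa [mulVec, dotProduct, transpose_apply, hx, hy, mul_comm, neg_mul, sub_neg_eq_add] using h1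
  have hBTy : Bᵀ *ᵥ y = (-β) • x + α • y := by
    ext i
    have h1 := congrArg Complex.im ((hziT i).symm.trans (congrFun hzT i))
    simp only [Complex.im_sum, Complex.mul_im, Complex.ofReal_re, Complex.ofReal_im,
      zero_mul, add_zero, Pi.smul_apply, smul_eq_mul, Complex.star_def,
      Complex.conj_re, Complex.conj_im] at h1
    simp only [mulVec, dotProduct, transpose_apply, hx, hy, Pi.add_apply, Pi.smul_apply,
      smul_eq_mul, neg_mul]
    linarith [h1]
  by_cases hβ : β = 0
  · -- real eigenvector
    left
    have hxy : x ≠ 0 ∨ y ≠ 0 := by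
      by_contra h
      push_neg at h
      apply hz0
      ext i
      have h1 := congrFun h.1 i
      have h2 := congrFun h.2 i
      simp only [hx, hy, Pi.zero_apply] at h1 h2
      simp [Complex.ext_iff, h1, h2]
    obtain ⟨v₀, hv₀, hv₀B, hv₀BT⟩ : ∃ v₀ : Fin m → ℝ, v₀ ≠ 0 ∧
        B *ᵥ v₀ = α • v₀ ∧ Bᵀ *ᵥ v₀ = α • v₀ := by
      rcases hxy with h | h
      · exact ⟨x, h, by simpa [hβ] using hBx, by simpa [hβ] using hBTx⟩
      · exact ⟨y, h, by simpa [hβ] using hBy, by simpa [hβ] using hBTy⟩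
    have hnn : 0 ≤ v₀ ⬝ᵥ v₀ := Finset.sum_nonneg fun i _ => mul_self_nonneg _
    have hpos : 0 < v₀ ⬝ᵥ v₀ :=
      lt_of_le_of_ne hnn (Ne.symm ((dotProduct_self_eq_zero (v := v₀)).not.mpr hv₀))
    set r := Real.sqrt (v₀ ⬝ᵥ v₀) with hr
    have hrpos : 0 < r := Real.sqrt_pos.mpr hpos
    refine ⟨α, r⁻¹ • v₀, ?_, ?_, ?_⟩
    · rw [smul_dotProduct, dotProduct_smul, smul_eq_mul, smul_eq_mul, ← mul_assoc, ← mul_inv,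
        hr, ← Real.sqrt_mul_self hpos.le]
      field_simp
      rw [Real.sq_sqrt (Real.sqrt_nonneg _)]
    · rw [mulVec_smul, hv₀B, smul_comm]
    · rw [mulVec_smul, hv₀BT, smul_comm]
  · -- complex eigenvalue, 2x2 block
    right
    have hzz : z ⬝ᵥ z = 0 := by
      have h1 : z ⬝ᵥ (N *ᵥ z) = μ * (z ⬝ᵥ z) := by rw [hzval, dotProduct_smul, smul_eq_mul]
      have h2 : z ⬝ᵥ (N *ᵥ z) = (star μ) * (z ⬝ᵥ z) := by
        rw [dotProduct_mulVec, ← mulVec_transpose, hzT, smul_dotProduct, smul_eq_mul]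
      have h3 : μ ≠ star μ := by
        simp only [Complex.star_def, ne_eq, Complex.ext_iff, Complex.conj_re, Complex.conj_im]
        intro h
        exact hβ (by linarith [h.2])
      rcases mul_eq_mul_right_iff.mp (h1.symm.trans h2) with h | h
      · exact absurd h h3
      · exact h
    have hre : x ⬝ᵥ x = y ⬝ᵥ y := by
      have := congrArg Complex.re hzz
      simp only [dotProduct, Complex.re_sum, Complex.mul_re, Complex.zero_re] at this
      simp only [dotProduct, hx, hy]
      linarith [Finset.sum_sub_distrib (f := fun i => x i * x i) (g := fun i => y i * y i)
        (s := Finset.univ)]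
    have him : x ⬝ᵥ y = 0 := by
      have := congrArg Complex.im hzz
      simp only [dotProduct, Complex.im_sum, Complex.mul_im, Complex.zero_im] at this
      simp only [dotProduct, hx, hy]
      have h2 : ∑ i, ((z i).re * (z i).im + (z i).im * (z i).re) = 0 := this
      have h3 : ∑ i, ((z i).re * (z i).im + (z i).im * (z i).re)
          = 2 * ∑ i, x i * y i := by
        rw [Finset.mul_sum]
        congr 1; ext i; simp [hx, hy]; ring
      linarith [h3 ▸ h2]
    have hx0 : x ≠ 0 := by
      intro h
      have hy0 : y = 0 := by
        have : y ⬝ᵥ y = 0 := by rw [← hre, h, zero_dotProduct]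
        exact dotProduct_self_eq_zero.mp this
      apply hz0
      ext i
      have h1 := congrFun h i
      have h2 := congrFun hy0 i
      simp only [hx, hy, Pi.zero_apply] at h1 h2
      simp [Complex.ext_iff, h1, h2]
    have hnn : 0 ≤ x ⬝ᵥ x := Finset.sum_nonneg fun i _ => mul_self_nonneg _
    have hpos : 0 < x ⬝ᵥ x :=
      lt_of_le_of_ne hnn (Ne.symm ((dotProduct_self_eq_zero (v := x)).not.mpr hx0))
    set r := Real.sqrt (x ⬝ᵥ x) with hr
    have hrpos : 0 < r := Real.sqrt_pos.mpr hpos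
    have hrr : r⁻¹ * r⁻¹ * (x ⬝ᵥ x) = 1 := by
      rw [← mul_inv, hr, ← Real.sqrt_mul_self hpos.le]
      field_simp
      rw [Real.sq_sqrt (Real.sqrt_nonneg _)]
    refine ⟨α, β, r⁻¹ • x, (-r⁻¹) • y, ?_, ?_, ?_, ?_, ?_, ?_, ?_⟩
    · rw [smul_dotProduct, dotProduct_smul, smul_eq_mul, smul_eq_mul, ← mul_assoc]; exact hrr
    · rw [smul_dotProduct, dotProduct_smul, smul_eq_mul, smul_eq_mul, ← mul_assoc,
        neg_mul_neg, ← hre]; exact hrr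
    · rw [smul_dotProduct, dotProduct_smul, smul_eq_mul, smul_eq_mul, him]; ring
    · rw [mulVec_smul, hBx]; module
    · rw [mulVec_smul, hBy]; module
    · rw [mulVec_smul, hBTx]; module
    · rw [mulVec_smul, hBTy]; module

lemma conj_entry {p : ℕ} (U B : Matrix (Fin p) (Fin p) ℝ) (i j : Fin p) :
    (Uᵀ * B * U) i j = (fun a => U a i) ⬝ᵥ (B *ᵥ fun a => U a j) := by
  simp only [Matrix.mul_apply, transpose_apply, dotProduct, mulVec, Finset.sum_mul,
    Finset.mul_sum]
  rw [Finset.sum_comm]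
  exact Finset.sum_congr rfl fun a _ => Finset.sum_congr rfl fun b _ => by ring

lemma conj_normal {p : ℕ} (U B : Matrix (Fin p) (Fin p) ℝ) (hU : Uᵀ * U = 1)
    (hUU : U * Uᵀ = 1) (hB : Bᵀ * B = B * Bᵀ) :
    (Uᵀ * B * U)ᵀ * (Uᵀ * B * U) = (Uᵀ * B * U) * (Uᵀ * B * U)ᵀ := by
  have c1 : ∀ X : Matrix (Fin p) (Fin p) ℝ, U * (Uᵀ * X) = X := fun X => by
    rw [← Matrix.mul_assoc, hUU, Matrix.one_mul]
  simp only [Matrix.transpose_mul, Matrix.transpose_transpose, Matrix.mul_assoc, c1]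
  rw [← Matrix.mul_assoc Bᵀ B U, hB, Matrix.mul_assoc]

lemma symm_low {a b : ℕ} (i : Fin (a+b)) (h : (i:ℕ) < a) :
    finSumFinEquiv.symm i = Sum.inl ⟨(i:ℕ), h⟩ := by
  rw [Equiv.symm_apply_eq]
  exact (Fin.ext (by simp)).symm

lemma symm_high {a b : ℕ} (i : Fin (a+b)) (h : a ≤ (i:ℕ)) :
    finSumFinEquiv.symm i = Sum.inr ⟨(i:ℕ) - a, by omega⟩ := by
  rw [Equiv.symm_apply_eq]
  refine (Fin.ext ?_).symm
  simp
  omega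

def IsCanon {m : ℕ} (Λ : Matrix (Fin m) (Fin m) ℝ) (ℓ : ℕ) : Prop :=
  2 * ℓ ≤ m ∧
  (∀ t : ℕ, t < ℓ → ∀ h : 2 * t + 1 < m,
    Λ ⟨2*t, Nat.lt_of_succ_lt h⟩ ⟨2*t, Nat.lt_of_succ_lt h⟩ = Λ ⟨2*t+1, h⟩ ⟨2*t+1, h⟩ ∧
    Λ ⟨2*t, Nat.lt_of_succ_lt h⟩ ⟨2*t+1, h⟩ = - Λ ⟨2*t+1, h⟩ ⟨2*t, Nat.lt_of_succ_lt h⟩) ∧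
  (∀ i j : Fin m, i ≠ j →
    (¬ ∃ t : ℕ, t < ℓ ∧ (((i:ℕ) = 2*t ∧ (j:ℕ) = 2*t+1) ∨ ((i:ℕ) = 2*t+1 ∧ (j:ℕ) = 2*t))) →
    Λ i j = 0)

set_option maxHeartbeats 1600000 in
theorem master : ∀ m : ℕ, ∀ B : Matrix (Fin m) (Fin m) ℝ, Bᵀ * B = B * Bᵀ →
    ∃ (Q Λ : Matrix (Fin m) (Fin m) ℝ) (ℓ : ℕ),
      Qᵀ * Q = 1 ∧ IsCanon Λ ℓ ∧ B = Q * Λ * Qᵀ := by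
  intro m
  induction m using Nat.strong_induction_on with
  | _ m IH =>
  intro B hB
  rcases Nat.eq_zero_or_pos m with rfl | hm
  · refine ⟨1, B, 0, by simp, ⟨by omega, by omega, fun i => absurd i.2 (by omega)⟩, by simp⟩
  rcases exists_eigen_real hm B hB with ⟨α, v, hv1, hvB, hvBT⟩ |
      ⟨α, β, e, f, he1, hf1, hef, heB, hfB, heBT, hfBT⟩
  · -- real eigenvector case
    obtain ⟨k, rfl⟩ : ∃ k, m = k + 1 := ⟨m - 1, by omega⟩
    obtain ⟨U, hU, hUcol⟩ := ext_orthogonal (fun _ : Fin 1 => v) (fun _ => Fin.last k)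
      (fun a b _ => Subsingleton.elim a b)
      (fun a b => by rw [if_pos (Subsingleton.elim a b)]; exact hv1)
    have hUU : U * Uᵀ = 1 := mul_eq_one_comm.mp hU
    set M := Uᵀ * B * U with hMdef
    have hcols : ∀ i j, (fun a => U a i) ⬝ᵥ (fun a => U a j) = if i = j then 1 else 0 := by
      intro i j
      have h0 := congrFun (congrFun hU i) j
      simpa [Matrix.mul_apply, transpose_apply, dotProduct, Matrix.one_apply] using h0
    have hcolv : (fun a => U a (Fin.last k)) = v := funext fun i => hUcol 0 i
    have hMcol : ∀ i, M i (Fin.last k) = if i = Fin.last k then α else 0 := by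
      intro i
      rw [hMdef, conj_entry, hcolv, hvB, dotProduct_smul, ← hcolv, hcols]
      split <;> simp
    have hMrow : ∀ j, M (Fin.last k) j = if j = Fin.last k then α else 0 := by
      intro j
      rw [hMdef, conj_entry, dotProduct_mulVec]
      have : (fun a => U a (Fin.last k)) ᵥ* B = α • v := by
        rw [hcolv, ← Matrix.mulVec_transpose, hvBT]
      rw [this, smul_dotProduct, ← hcolv, hcols]
      rcases eq_or_ne j (Fin.last k) with h | h
      · rw [if_pos h.symm, if_pos h]; simp
      · rw [if_neg (fun hh => h hh.symm), if_neg h]; simp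
    set B' := M.submatrix Fin.castSucc Fin.castSucc with hB'def
    set X : Matrix (Fin 1) (Fin 1) ℝ := Matrix.of fun _ _ => α with hXdef
    have hcastlt : ∀ a : Fin k, ((Fin.castSucc a : Fin (k+1)) : ℕ) < k := fun a => a.2
    have hMb : M = (fromBlocks B' 0 0 X).submatrix finSumFinEquiv.symm finSumFinEquiv.symm := by
      ext i j
      rw [submatrix_apply]
      rcases Nat.lt_or_ge (i : ℕ) k with hi | hi
      · rcases Nat.lt_or_ge (j : ℕ) k with hj | hj
        · rw [symm_low i hi, symm_low j hj]
          simp only [fromBlocks_apply₁₁, hB'def, submatrix_apply]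
          congr 1 <;> exact Fin.ext (by simp)
        · have hj' : j = Fin.last k := Fin.ext (by simp only [Fin.val_last]; omega)
          rw [symm_low i hi, symm_high j hj]
          simp only [fromBlocks_apply₁₂, Matrix.zero_apply]
          rw [hj', hMcol,
            if_neg (fun hh => by rw [hh] at hi; simp only [Fin.val_last] at hi; omega)]
      · have hi' : i = Fin.last k := Fin.ext (by simp only [Fin.val_last]; omega)
        rw [symm_high i hi]
        rcases Nat.lt_or_ge (j : ℕ) k with hj | hj
        · rw [symm_low j hj]
          simp only [fromBlocks_apply₂₁, Matrix.zero_apply]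
          rw [hi', hMrow,
            if_neg (fun hh => by rw [hh] at hj; simp only [Fin.val_last] at hj; omega)]
        · have hj' : j = Fin.last k := Fin.ext (by simp only [Fin.val_last]; omega)
          rw [symm_high j hj]
          simp only [fromBlocks_apply₂₂, hXdef, Matrix.of_apply]
          rw [hi', hj', hMrow, if_pos rfl]
    have hMnormal : Mᵀ * M = M * Mᵀ := conj_normal U B hU hUU hB
    have hblock : fromBlocks (B'ᵀ * B') 0 0 (Xᵀ * X) = fromBlocks (B' * B'ᵀ) 0 0 (X * Xᵀ) := by
      apply (Matrix.reindex finSumFinEquiv finSumFinEquiv).injective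
      have e1 : ∀ (P R : Matrix (Fin k) (Fin k) ℝ) (Y Z : Matrix (Fin 1) (Fin 1) ℝ),
          reindex finSumFinEquiv finSumFinEquiv (fromBlocks (P * R) 0 0 (Y * Z)) =
          (fromBlocks P 0 0 Y).submatrix finSumFinEquiv.symm finSumFinEquiv.symm *
          (fromBlocks R 0 0 Z).submatrix finSumFinEquiv.symm finSumFinEquiv.symm := by
        intro P R Y Z
        rw [reindex_apply, submatrix_mul_equiv, fromBlocks_multiply]
        simp
      rw [e1, e1, ← hMb]
      have hMT : Mᵀ = (fromBlocks B'ᵀ 0 0 Xᵀ).submatrix finSumFinEquiv.symm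
          finSumFinEquiv.symm := by
        rw [hMb, transpose_submatrix, fromBlocks_transpose]
        simp
      rw [← hMT, hMnormal]
    have hB'norm : B'ᵀ * B' = B' * B'ᵀ := by
      have := congrArg Matrix.toBlocks₁₁ hblock
      simpa [Matrix.toBlocks_fromBlocks₁₁] using this
    obtain ⟨Q', Λ', ℓ', hQ', hcanon', hBQ'⟩ := IH k (by omega) B' hB'norm
    obtain ⟨ha', hb', hc'⟩ := hcanon'
    set RQ := (fromBlocks Q' 0 0 (1 : Matrix (Fin 1) (Fin 1) ℝ)).submatrix
      finSumFinEquiv.symm finSumFinEquiv.symm with hRQdef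
    set Λ := (fromBlocks Λ' 0 0 X).submatrix finSumFinEquiv.symm finSumFinEquiv.symm with hΛdef
    have hmulb : ∀ (P R : Matrix (Fin k) (Fin k) ℝ) (Y Z : Matrix (Fin 1) (Fin 1) ℝ),
        (fromBlocks P 0 0 Y).submatrix finSumFinEquiv.symm finSumFinEquiv.symm *
        (fromBlocks R 0 0 Z).submatrix finSumFinEquiv.symm finSumFinEquiv.symm =
        (fromBlocks (P * R) 0 0 (Y * Z)).submatrix finSumFinEquiv.symm finSumFinEquiv.symm := by
      intro P R Y Z
      rw [submatrix_mul_equiv, fromBlocks_multiply]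
      simp
    have hRQT : RQᵀ = (fromBlocks Q'ᵀ 0 0 (1 : Matrix (Fin 1) (Fin 1) ℝ)).submatrix
        finSumFinEquiv.symm finSumFinEquiv.symm := by
      rw [hRQdef, transpose_submatrix, fromBlocks_transpose]
      simp
    refine ⟨U * RQ, Λ, ℓ', ?_, ?_, ?_⟩
    · rw [transpose_mul, Matrix.mul_assoc, ← Matrix.mul_assoc Uᵀ U RQ, hU, Matrix.one_mul,
        hRQT, hRQdef, hmulb, hQ', Matrix.mul_one, fromBlocks_one]
      exact Matrix.submatrix_one_equiv finSumFinEquiv.symm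
    · constructor
      · omega
      constructor
      · intro t ht h
        have h2lk : 2*t+1 < k := by omega
        have hi0 : (⟨2*t, by omega⟩ : Fin (k+1)) = Fin.castSucc ⟨2*t, by omega⟩ := rfl
        have hi1 : (⟨2*t+1, h⟩ : Fin (k+1)) = Fin.castSucc ⟨2*t+1, h2lk⟩ := rfl
        have hsym : ∀ (a : Fin k),
            finSumFinEquiv.symm (Fin.castSucc a) = Sum.inl a := by
          intro a
          rw [symm_low _ (hcastlt a)]
          congr 1
        have hbt := hb' t ht h2lk
        constructor
        · rw [hΛdef, hi0, hi1]
          simp only [submatrix_apply, hsym, fromBlocks_apply₁₁]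
          convert hbt.1 using 2
        · rw [hΛdef, hi0, hi1]
          simp only [submatrix_apply, hsym, fromBlocks_apply₁₁]
          convert hbt.2 using 2
      · intro i j hij hnp
        rw [hΛdef, submatrix_apply]
        rcases Nat.lt_or_ge (i : ℕ) k with hi | hi
        · rcases Nat.lt_or_ge (j : ℕ) k with hj | hj
          · rw [symm_low i hi, symm_low j hj]
            simp only [fromBlocks_apply₁₁]
            apply hc'
            · intro hh
              exact hij (by apply Fin.ext; simpa using congrArg Fin.val hh)
            · simpa using hnp
          · rw [symm_low i hi, symm_high j hj]; simp
        · rcases Nat.lt_or_ge (j : ℕ) k with hj | hj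
          · rw [symm_high i hi, symm_low j hj]; simp
          · exact absurd (Fin.ext (by omega) : i = j) hij
    · have hBM : B = U * M * Uᵀ := by
        rw [hMdef]
        calc B = (U*Uᵀ)*B*(U*Uᵀ) := by rw [hUU, Matrix.one_mul, Matrix.mul_one]
        _ = U*(Uᵀ*B*U)*Uᵀ := by simp only [Matrix.mul_assoc]
      rw [hBM, hMb, hBQ']
      rw [transpose_mul]
      have : (fromBlocks (Q' * Λ' * Q'ᵀ) 0 0 X).submatrix finSumFinEquiv.symm
          finSumFinEquiv.symm = RQ * Λ * RQᵀ := by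
        rw [hRQT, hΛdef, hRQdef, hmulb, hmulb, Matrix.one_mul, Matrix.mul_one,
          Matrix.mul_assoc]
      rw [this]
      simp only [Matrix.mul_assoc]
  · -- 2x2 block case
    have hif : ∀ (P : Prop) [Decidable P] (c : ℝ), (if P then (1:ℝ) else 0) * c
        = if P then c else 0 := by
      intro P _ c; split <;> simp
    have hm2 : 2 ≤ m := by
      by_contra hlt
      push_neg at hlt
      obtain rfl : m = 1 := by omega
      have h1 : e 0 * e 0 = 1 := by simpa [dotProduct] using he1
      have h2 : f 0 * f 0 = 1 := by simpa [dotProduct] using hf1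
      have h3 : e 0 * f 0 = 0 := by simpa [dotProduct] using hef
      nlinarith [h1, h2, h3]
    obtain ⟨k, rfl⟩ : ∃ k, m = k + 2 := ⟨m - 2, by omega⟩
    set e2 : Fin 2 ⊕ Fin k ≃ Fin (k+2) := finSumFinEquiv.trans (finCongr (by omega)) with he2
    have e2low : ∀ (i : Fin (k+2)) (h : (i:ℕ) < 2), e2.symm i = Sum.inl ⟨(i:ℕ), h⟩ := by
      intro i h
      rw [Equiv.symm_apply_eq]
      exact (Fin.ext (by simp [he2])).symm
    have e2high : ∀ (i : Fin (k+2)) (h : 2 ≤ (i:ℕ)),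
        e2.symm i = Sum.inr ⟨(i:ℕ) - 2, by omega⟩ := by
      intro i h
      rw [Equiv.symm_apply_eq]
      refine (Fin.ext ?_).symm
      simp [he2]
      omega
    set g : Fin 2 → (Fin (k+2) → ℝ) := fun a => if (a:ℕ) = 0 then e else f with hgdef
    obtain ⟨U, hU, hUcol⟩ := ext_orthogonal g (fun a => ⟨(a:ℕ), by omega⟩)
      (fun a b hab => Fin.ext (by simpa using congrArg Fin.val hab))
      (by
        intro a b
        have hab2 : (a = b) ↔ ((a:ℕ) = (b:ℕ)) := ⟨fun h => by rw [h], fun h => Fin.ext h⟩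
        rcases (show (a:ℕ) = 0 ∨ (a:ℕ) = 1 by omega) with ha | ha <;>
          rcases (show (b:ℕ) = 0 ∨ (b:ℕ) = 1 by omega) with hb | hb <;>
          simp only [hgdef, ha, hb, if_pos, if_neg, one_ne_zero, if_true, if_false, hab2]
        · simpa using he1
        · simpa using hef
        · rw [dotProduct_comm]; simpa using hef
        · simpa using hf1)
    have hUU : U * Uᵀ = 1 := mul_eq_one_comm.mp hU
    set M := Uᵀ * B * U with hMdef
    have hcols : ∀ i j, (fun a => U a i) ⬝ᵥ (fun a => U a j) = if i = j then 1 else 0 := by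
      intro i j
      have h0 := congrFun (congrFun hU i) j
      simpa [Matrix.mul_apply, transpose_apply, dotProduct, Matrix.one_apply] using h0
    set i0 : Fin (k+2) := ⟨0, by omega⟩ with hi0def
    set i1 : Fin (k+2) := ⟨1, by omega⟩ with hi1def
    have hcole : (fun a => U a i0) = e := funext fun i => by
      have h := hUcol ⟨0, by omega⟩ i; simpa [hgdef, hi0def] using h
    have hcolf : (fun a => U a i1) = f := funext fun i => by
      have h := hUcol ⟨1, by omega⟩ i; simpa [hgdef, hi1def] using h
    have hne01 : i0 ≠ i1 := by simp [hi0def, hi1def, Fin.ext_iff]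
    have hMc0 : ∀ i, M i i0 = (if i = i0 then α else 0) + (if i = i1 then β else 0) := by
      intro i
      rw [hMdef, conj_entry, hcole, heB, dotProduct_add, dotProduct_smul, dotProduct_smul,
        ← hcole, ← hcolf, hcols, hcols, smul_eq_mul, smul_eq_mul, mul_ite, mul_ite]
      simp
    have hMc1 : ∀ i, M i i1 = (if i = i0 then -β else 0) + (if i = i1 then α else 0) := by
      intro i
      rw [hMdef, conj_entry, hcolf, hfB, dotProduct_add, dotProduct_smul, dotProduct_smul,
        ← hcole, ← hcolf, hcols, hcols, smul_eq_mul, smul_eq_mul, mul_ite, mul_ite]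
      simp
    have hMr0 : ∀ j, M i0 j = (if j = i0 then α else 0) + (if j = i1 then -β else 0) := by
      intro j
      rw [hMdef, conj_entry, dotProduct_mulVec]
      have hv : (fun a => U a i0) ᵥ* B = α • e - β • f := by
        rw [hcole, ← Matrix.mulVec_transpose, heBT]
      rw [hv, sub_dotProduct, smul_dotProduct, smul_dotProduct, ← hcole, ← hcolf, hcols, hcols,
        smul_eq_mul, smul_eq_mul, mul_ite, mul_ite]
      rcases eq_or_ne j i0 with rfl | h0
      · rw [if_pos rfl, if_pos rfl, if_neg (Ne.symm hne01), if_neg hne01]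
        ring
      · rcases eq_or_ne j i1 with rfl | h1
        · rw [if_neg hne01, if_pos rfl, if_neg (Ne.symm hne01), if_pos rfl]
          ring
        · rw [if_neg (fun hh => h0 hh.symm), if_neg (fun hh => h1 hh.symm),
            if_neg h0, if_neg h1]
          ring
    have hMr1 : ∀ j, M i1 j = (if j = i0 then β else 0) + (if j = i1 then α else 0) := by
      intro j
      rw [hMdef, conj_entry, dotProduct_mulVec]
      have hv : (fun a => U a i1) ᵥ* B = β • e + α • f := by
        rw [hcolf, ← Matrix.mulVec_transpose, hfBT]
      rw [hv, add_dotProduct, smul_dotProduct, smul_dotProduct, ← hcole, ← hcolf, hcols, hcols,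
        smul_eq_mul, smul_eq_mul, mul_ite, mul_ite]
      rcases eq_or_ne j i0 with rfl | h0
      · rw [if_pos rfl, if_pos rfl, if_neg (Ne.symm hne01), if_neg hne01]
        ring
      · rcases eq_or_ne j i1 with rfl | h1
        · rw [if_neg hne01, if_pos rfl, if_neg (Ne.symm hne01), if_pos rfl]
          ring
        · rw [if_neg (fun hh => h0 hh.symm), if_neg (fun hh => h1 hh.symm),
            if_neg h0, if_neg h1]
          ring
    set R : Matrix (Fin 2) (Fin 2) ℝ := !![α, -β; β, α] with hRdef
    set B' : Matrix (Fin k) (Fin k) ℝ :=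
      M.submatrix (fun a : Fin k => ⟨(a:ℕ)+2, by omega⟩) (fun a : Fin k => ⟨(a:ℕ)+2, by omega⟩)
      with hB'def
    have hRval : ∀ (a b : Fin 2), R a b =
        (if (a:ℕ) = 0 then (if (b:ℕ) = 0 then α else -β) else
          (if (b:ℕ) = 0 then β else α)) := by
      intro a b
      fin_cases a <;> fin_cases b <;> simp [hRdef]
    have hMb : M = (fromBlocks R 0 0 B').submatrix e2.symm e2.symm := by
      ext i j
      rw [submatrix_apply]
      rcases Nat.lt_or_ge (i:ℕ) 2 with hi | hi
      · rw [e2low i hi]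
        have hival : i = i0 ∨ i = i1 := by
          rcases (show (i:ℕ) = 0 ∨ (i:ℕ) = 1 by omega) with h | h
          · exact Or.inl (Fin.ext h)
          · exact Or.inr (Fin.ext h)
        rcases Nat.lt_or_ge (j:ℕ) 2 with hj | hj
        · rw [e2low j hj]
          simp only [fromBlocks_apply₁₁]
          rw [hRval]
          have hjval : j = i0 ∨ j = i1 := by
            rcases (show (j:ℕ) = 0 ∨ (j:ℕ) = 1 by omega) with h | h
            · exact Or.inl (Fin.ext h)
            · exact Or.inr (Fin.ext h)
          rcases hival with rfl | rfl <;> rcases hjval with rfl | rfl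
          · rw [hMr0, if_pos rfl, if_neg hne01]; simp [hi0def]
          · rw [hMr0, if_neg (Ne.symm hne01), if_pos rfl]; simp [hi0def, hi1def]
          · rw [hMr1, if_pos rfl, if_neg hne01]; simp [hi0def, hi1def]
          · rw [hMr1, if_neg (Ne.symm hne01), if_pos rfl]; simp [hi1def]
        · rw [e2high j hj]
          simp only [fromBlocks_apply₁₂, Matrix.zero_apply]
          have hj0 : j ≠ i0 := fun hh => by rw [hh] at hj; simp [hi0def] at hj
          have hj1 : j ≠ i1 := fun hh => by rw [hh] at hj; simp [hi1def] at hj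
          rcases hival with rfl | rfl
          · rw [hMr0, if_neg hj0, if_neg hj1, add_zero]
          · rw [hMr1, if_neg hj0, if_neg hj1, add_zero]
      · rw [e2high i hi]
        rcases Nat.lt_or_ge (j:ℕ) 2 with hj | hj
        · rw [e2low j hj]
          simp only [fromBlocks_apply₂₁, Matrix.zero_apply]
          have hi0' : i ≠ i0 := fun hh => by rw [hh] at hi; simp [hi0def] at hi
          have hi1' : i ≠ i1 := fun hh => by rw [hh] at hi; simp [hi1def] at hi
          have hjval : j = i0 ∨ j = i1 := by
            rcases (show (j:ℕ) = 0 ∨ (j:ℕ) = 1 by omega) with h | h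
            · exact Or.inl (Fin.ext h)
            · exact Or.inr (Fin.ext h)
          rcases hjval with rfl | rfl
          · rw [hMc0, if_neg hi0', if_neg hi1', add_zero]
          · rw [hMc1, if_neg hi0', if_neg hi1', add_zero]
        · rw [e2high j hj]
          simp only [fromBlocks_apply₂₂, hB'def, submatrix_apply]
          congr 1 <;> exact Fin.ext (by simp; omega)
    have hMnormal : Mᵀ * M = M * Mᵀ := conj_normal U B hU hUU hB
    have hmulb : ∀ (P Rm : Matrix (Fin 2) (Fin 2) ℝ) (Y Z : Matrix (Fin k) (Fin k) ℝ),
        (fromBlocks P 0 0 Y).submatrix e2.symm e2.symm *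
        (fromBlocks Rm 0 0 Z).submatrix e2.symm e2.symm =
        (fromBlocks (P * Rm) 0 0 (Y * Z)).submatrix e2.symm e2.symm := by
      intro P Rm Y Z
      rw [submatrix_mul_equiv, fromBlocks_multiply]
      simp
    have hblock : fromBlocks (Rᵀ * R) 0 0 (B'ᵀ * B') = fromBlocks (R * Rᵀ) 0 0 (B' * B'ᵀ) := by
      apply (Matrix.reindex e2 e2).injective
      have e1 : ∀ (P Rm : Matrix (Fin 2) (Fin 2) ℝ) (Y Z : Matrix (Fin k) (Fin k) ℝ),
          reindex e2 e2 (fromBlocks (P * Rm) 0 0 (Y * Z)) =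
          (fromBlocks P 0 0 Y).submatrix e2.symm e2.symm *
          (fromBlocks Rm 0 0 Z).submatrix e2.symm e2.symm := by
        intro P Rm Y Z
        rw [reindex_apply, hmulb]
      rw [e1, e1, ← hMb]
      have hMT : Mᵀ = (fromBlocks Rᵀ 0 0 B'ᵀ).submatrix e2.symm e2.symm := by
        rw [hMb, transpose_submatrix, fromBlocks_transpose]
        simp
      rw [← hMT, hMnormal]
    have hB'norm : B'ᵀ * B' = B' * B'ᵀ := by
      have := congrArg Matrix.toBlocks₂₂ hblock
      simpa [Matrix.toBlocks_fromBlocks₂₂] using this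
    obtain ⟨Q', Λ', ℓ', hQ', hcanon', hBQ'⟩ := IH k (by omega) B' hB'norm
    obtain ⟨ha', hb', hc'⟩ := hcanon'
    set RQ := (fromBlocks (1 : Matrix (Fin 2) (Fin 2) ℝ) 0 0 Q').submatrix
      e2.symm e2.symm with hRQdef
    set Λ := (fromBlocks R 0 0 Λ').submatrix e2.symm e2.symm with hΛdef
    have hRQT : RQᵀ = (fromBlocks (1 : Matrix (Fin 2) (Fin 2) ℝ) 0 0 Q'ᵀ).submatrix
        e2.symm e2.symm := by
      rw [hRQdef, transpose_submatrix, fromBlocks_transpose]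
      simp
    refine ⟨U * RQ, Λ, ℓ' + 1, ?_, ?_, ?_⟩
    · rw [transpose_mul, Matrix.mul_assoc, ← Matrix.mul_assoc Uᵀ U RQ, hU, Matrix.one_mul,
        hRQT, hRQdef, hmulb, hQ', Matrix.mul_one, fromBlocks_one]
      exact Matrix.submatrix_one_equiv e2.symm
    · refine ⟨by omega, ?_, ?_⟩
      · intro t ht h
        rcases Nat.eq_zero_or_pos t with rfl | htpos
        · have hx0 : (⟨2*0, by omega⟩ : Fin (k+2)) = i0 := Fin.ext (by simp [hi0def])
          have hx1 : (⟨2*0+1, h⟩ : Fin (k+2)) = i1 := Fin.ext (by simp [hi1def])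
          rw [hx0, hx1, hΛdef]
          simp only [submatrix_apply]
          rw [e2low i0 (by simp [hi0def]), e2low i1 (by simp [hi1def])]
          simp only [fromBlocks_apply₁₁]
          rw [hRval, hRval, hRval, hRval]
          constructor <;> simp [hi0def, hi1def]
        · obtain ⟨s, rfl⟩ : ∃ s, t = s + 1 := ⟨t - 1, by omega⟩
          have hs : s < ℓ' := by omega
          have hsk : 2*s+1 < k := by omega
          have hbs := hb' s hs hsk
          have hE0 : ∀ (hx : 2*(s+1) < k+2), e2.symm ⟨2*(s+1), hx⟩
              = Sum.inr ⟨2*s, by omega⟩ := by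
            intro hx
            rw [e2high _ (show (2:ℕ) ≤ 2*(s+1) by omega)]
            congr 1
            all_goals exact Fin.ext (by omega)
          have hE1 : ∀ (hx : 2*(s+1)+1 < k+2), e2.symm ⟨2*(s+1)+1, hx⟩
              = Sum.inr ⟨2*s+1, by omega⟩ := by
            intro hx
            rw [e2high _ (show (2:ℕ) ≤ 2*(s+1)+1 by omega)]
            congr 1
            all_goals exact Fin.ext (by omega)
          rw [hΛdef]
          simp only [submatrix_apply, hE0, hE1, fromBlocks_apply₂₂]
          exact hbs
      · intro i j hij hnp
        have hvne : (i:ℕ) ≠ (j:ℕ) := fun hh => hij (Fin.ext hh)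
        rw [hΛdef, submatrix_apply]
        rcases Nat.lt_or_ge (i:ℕ) 2 with hi | hi
        · rcases Nat.lt_or_ge (j:ℕ) 2 with hj | hj
          · exact absurd ⟨0, by omega, by omega⟩ hnp
          · rw [e2low i hi, e2high j hj]; simp
        · rcases Nat.lt_or_ge (j:ℕ) 2 with hj | hj
          · rw [e2high i hi, e2low j hj]; simp
          · rw [e2high i hi, e2high j hj]
            simp only [fromBlocks_apply₂₂]
            apply hc'
            · intro hh
              have := congrArg Fin.val hh
              simp at this
              exact hij (Fin.ext (by omega))
            · rintro ⟨t, ht, hp⟩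
              apply hnp
              refine ⟨t+1, by omega, ?_⟩
              simp only [] at hp
              rcases hp with ⟨h1, h2⟩ | ⟨h1, h2⟩
              · left; constructor <;> omega
              · right; constructor <;> omega
    · have hBM : B = U * M * Uᵀ := by
        rw [hMdef]
        calc B = (U*Uᵀ)*B*(U*Uᵀ) := by rw [hUU, Matrix.one_mul, Matrix.mul_one]
        _ = U*(Uᵀ*B*U)*Uᵀ := by simp only [Matrix.mul_assoc]
      rw [hBM, hMb, hBQ']
      rw [transpose_mul]
      have hfin : (fromBlocks R 0 0 (Q' * Λ' * Q'ᵀ)).submatrix e2.symm e2.symm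
          = RQ * Λ * RQᵀ := by
        rw [hRQT, hΛdef, hRQdef, hmulb, hmulb, Matrix.one_mul, Matrix.mul_one,
          Matrix.mul_assoc]
      rw [hfin]
      simp only [Matrix.mul_assoc]

lemma corner_conj {n : ℕ} (O Z : Matrix (Fin (n+1)) (Fin (n+1)) ℝ)
    (hZcol : ∀ k, Z k (Fin.last n) = 0) (hZrow : ∀ l, Z (Fin.last n) l = 0) (i j : Fin n) :
    (O * Z * Oᵀ) (Fin.castSucc i) (Fin.castSucc j) =
    ((O.submatrix Fin.castSucc Fin.castSucc) * (Z.submatrix Fin.castSucc Fin.castSucc) *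
      (O.submatrix Fin.castSucc Fin.castSucc)ᵀ) i j := by
  simp only [Matrix.mul_apply, transpose_apply, submatrix_apply]
  rw [Fin.sum_univ_castSucc
    (f := fun l => (∑ k, O (Fin.castSucc i) k * Z k l) * O (Fin.castSucc j) l)]
  simp only [hZcol, mul_zero, Finset.sum_const_zero, zero_mul, add_zero]
  apply Finset.sum_congr rfl
  intro l _
  congr 1
  rw [Fin.sum_univ_castSucc (f := fun k => O (Fin.castSucc i) k * Z k (Fin.castSucc l))]
  simp [hZrow]

lemma orth_norm {p : ℕ} (Q : Matrix (Fin p) (Fin p) ℝ) (hQ : Qᵀ * Q = 1) (x : Fin p → ℝ) :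
    (Q *ᵥ x) ⬝ᵥ (Q *ᵥ x) = x ⬝ᵥ x := by
  have h1 : x ⬝ᵥ (Qᵀ *ᵥ (Q *ᵥ x)) = (Q *ᵥ x) ⬝ᵥ (Q *ᵥ x) := by
    rw [dotProduct_mulVec, ← Matrix.mulVec_transpose, transpose_transpose]
  rw [← h1, mulVec_mulVec, hQ, one_mulVec]

lemma normal_of_comm {p : ℕ} (Sg K : Matrix (Fin p) (Fin p) ℝ) (hS : Sgᵀ = Sg)
    (hKT : Kᵀ = -K) (hcomm : Sg*K = K*Sg) :
    (Sg+K)ᵀ*(Sg+K) = (Sg+K)*(Sg+K)ᵀ := by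
  rw [Matrix.transpose_add, hS, hKT]
  simp only [add_mul, mul_add, Matrix.neg_mul, Matrix.mul_neg]
  rw [hcomm]
  abel


set_option maxHeartbeats 1600000 in
theorem stmt13 (n : ℕ) (hn : Even n) (A : Matrix (Fin n) (Fin n) ℝ)
    (hA : ¬ Aᵀ * A = A * Aᵀ) :
    (∃ B : Matrix (Fin (n + 1)) (Fin (n + 1)) ℝ, Bᵀ * B = B * Bᵀ ∧
        ∀ i j : Fin n, B i.castSucc j.castSucc = A i j) ↔
    ∃ (C D : Matrix (Fin n) (Fin n) ℝ) (μ : ℝ),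
      -- C is a contraction
      (∀ v : Fin n → ℝ, ∑ i, ((C *ᵥ v) i) ^ 2 ≤ ∑ i, (v i) ^ 2) ∧
      -- C admits an orthogonal completion of size (n+1)×(n+1)
      (∃ O : Matrix (Fin (n + 1)) (Fin (n + 1)) ℝ, Oᵀ * O = 1 ∧
          ∀ i j : Fin n, O i.castSucc j.castSucc = C i j) ∧
      -- D is block diagonal with 2×2 blocks [[α,β],[−β,α]] followed by scalar diagonal entries
      (∃ ℓ : ℕ, 2 * ℓ ≤ n ∧
        (∀ t : ℕ, t < ℓ → ∀ h : 2 * t + 1 < n,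
          D ⟨2 * t, by omega⟩ ⟨2 * t, by omega⟩ = D ⟨2 * t + 1, h⟩ ⟨2 * t + 1, h⟩ ∧
          D ⟨2 * t, by omega⟩ ⟨2 * t + 1, h⟩ = - D ⟨2 * t + 1, h⟩ ⟨2 * t, by omega⟩) ∧
        (∀ i j : Fin n, i ≠ j →
          (¬ ∃ t : ℕ, t < ℓ ∧ (((i : ℕ) = 2 * t ∧ (j : ℕ) = 2 * t + 1) ∨
            ((i : ℕ) = 2 * t + 1 ∧ (j : ℕ) = 2 * t))) → D i j = 0)) ∧
      A = C * D * Cᵀ + μ • (1 : Matrix (Fin n) (Fin n) ℝ) := by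
  constructor
  · rintro ⟨B, hBnorm, hcorner⟩
    obtain ⟨Q, Λ, ℓ, hQ, ⟨hl, hbl, hz⟩, hBQ⟩ := master (n+1) B hBnorm
    obtain ⟨c, hc⟩ := hn
    have h2ln : 2 * ℓ ≤ n := by omega
    set μ := Λ (Fin.last n) (Fin.last n) with hμdef
    set Z := Λ - μ • (1 : Matrix (Fin (n+1)) (Fin (n+1)) ℝ) with hZdef
    set C := Q.submatrix Fin.castSucc Fin.castSucc with hCdef
    set D := Z.submatrix Fin.castSucc Fin.castSucc with hDdef
    have hlastval : ((Fin.last n : Fin (n+1)) : ℕ) = n := rfl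
    have hZcol : ∀ k, Z k (Fin.last n) = 0 := by
      intro k
      rcases eq_or_ne k (Fin.last n) with rfl | hk
      · simp [hZdef, Matrix.sub_apply, Matrix.smul_apply, Matrix.one_apply, hμdef]
      · have hnp : ¬ ∃ t, t < ℓ ∧ (((k:ℕ) = 2*t ∧ ((Fin.last n : Fin (n+1)):ℕ) = 2*t+1) ∨
            ((k:ℕ) = 2*t+1 ∧ ((Fin.last n : Fin (n+1)):ℕ) = 2*t)) := by
          rintro ⟨t, ht, hd⟩
          rw [hlastval] at hd
          rcases hd with ⟨h1, h2⟩ | ⟨h1, h2⟩ <;> omega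
        have h0 := hz k (Fin.last n) hk hnp
        simp [hZdef, Matrix.sub_apply, Matrix.smul_apply, Matrix.one_apply, hk, h0]
    have hZrow : ∀ k, Z (Fin.last n) k = 0 := by
      intro k
      rcases eq_or_ne k (Fin.last n) with rfl | hk
      · simp [hZdef, Matrix.sub_apply, Matrix.smul_apply, Matrix.one_apply, hμdef]
      · have hnp : ¬ ∃ t, t < ℓ ∧ ((((Fin.last n : Fin (n+1)):ℕ) = 2*t ∧ (k:ℕ) = 2*t+1) ∨
            (((Fin.last n : Fin (n+1)):ℕ) = 2*t+1 ∧ (k:ℕ) = 2*t)) := by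
          rintro ⟨t, ht, hd⟩
          rw [hlastval] at hd
          rcases hd with ⟨h1, h2⟩ | ⟨h1, h2⟩ <;> omega
        have h0 := hz (Fin.last n) k (Ne.symm hk) hnp
        simp [hZdef, Matrix.sub_apply, Matrix.smul_apply, Matrix.one_apply, Ne.symm hk, h0]
    have hQQT : Q * Qᵀ = 1 := mul_eq_one_comm.mp hQ
    have hBsplit : B = Q * Z * Qᵀ + μ • (1 : Matrix (Fin (n+1)) (Fin (n+1)) ℝ) := by
      have hexp : Q * (Λ - μ•(1 : Matrix (Fin (n+1)) (Fin (n+1)) ℝ)) * Qᵀ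
          = Q*Λ*Qᵀ - μ • (Q*Qᵀ) := by
        rw [Matrix.mul_sub, Matrix.sub_mul, mul_smul_comm, smul_mul_assoc, Matrix.mul_one]
      rw [hZdef, hexp, hQQT, hBQ]
      abel
    refine ⟨C, D, μ, ?_, ⟨Q, hQ, fun i j => rfl⟩, ⟨ℓ, h2ln, ?_, ?_⟩, ?_⟩
    · -- contraction
      intro v
      set vhat : Fin (n+1) → ℝ := fun k => if h : (k:ℕ) < n then v ⟨(k:ℕ), h⟩ else 0 with hvh
      have hCv : ∀ i : Fin n, (C *ᵥ v) i = (Q *ᵥ vhat) (Fin.castSucc i) := by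
        intro i
        simp only [mulVec, dotProduct, hCdef, submatrix_apply]
        rw [Fin.sum_univ_castSucc (f := fun k => Q (Fin.castSucc i) k * vhat k)]
        have h1 : vhat (Fin.last n) = 0 := by
          rw [hvh]; simp
        have h2 : ∀ j : Fin n, vhat (Fin.castSucc j) = v j := by
          intro j
          rw [hvh]
          simp only [Fin.coe_castSucc]
          rw [dif_pos j.2]
        simp [h1, h2]
      have hsum : ∑ i : Fin n, ((C *ᵥ v) i)^2 ≤ ∑ k : Fin (n+1), ((Q *ᵥ vhat) k)^2 := by
        rw [Fin.sum_univ_castSucc (f := fun k => ((Q *ᵥ vhat) k)^2)]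
        have := sq_nonneg ((Q *ᵥ vhat) (Fin.last n))
        have heq : ∑ i : Fin n, ((C *ᵥ v) i)^2
            = ∑ i : Fin n, ((Q *ᵥ vhat) (Fin.castSucc i))^2 := by
          apply Finset.sum_congr rfl
          intro i _
          rw [hCv]
        rw [heq]
        linarith
      have hnorm : ∑ k : Fin (n+1), ((Q *ᵥ vhat) k)^2 = ∑ k : Fin (n+1), (vhat k)^2 := by
        have h3 := orth_norm Q hQ vhat
        simp only [dotProduct] at h3
        calc ∑ k : Fin (n+1), ((Q *ᵥ vhat) k)^2
            = ∑ k : Fin (n+1), (Q *ᵥ vhat) k * (Q *ᵥ vhat) k := by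
              apply Finset.sum_congr rfl; intro k _; ring
        _ = ∑ k : Fin (n+1), vhat k * vhat k := h3
        _ = ∑ k : Fin (n+1), (vhat k)^2 := by
              apply Finset.sum_congr rfl; intro k _; ring
      have hvsum : ∑ k : Fin (n+1), (vhat k)^2 = ∑ i : Fin n, (v i)^2 := by
        rw [Fin.sum_univ_castSucc (f := fun k => (vhat k)^2)]
        have h1 : vhat (Fin.last n) = 0 := by rw [hvh]; simp
        have h2 : ∀ j : Fin n, vhat (Fin.castSucc j) = v j := by
          intro j
          rw [hvh]
          simp only [Fin.coe_castSucc]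
          rw [dif_pos j.2]
        simp [h1, h2]
      rw [hvsum] at hnorm
      rw [hnorm] at hsum
      exact hsum
    · -- block conditions
      intro t ht h
      have h' : 2*t+1 < n+1 := by omega
      have hx0 : Fin.castSucc (⟨2*t, by omega⟩ : Fin n) = (⟨2*t, by omega⟩ : Fin (n+1)) :=
        Fin.ext rfl
      have hx1 : Fin.castSucc (⟨2*t+1, h⟩ : Fin n) = (⟨2*t+1, h'⟩ : Fin (n+1)) :=
        Fin.ext rfl
      have hbt := hbl t ht h'
      have hne : (⟨2*t, by omega⟩ : Fin (n+1)) ≠ ⟨2*t+1, h'⟩ := by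
        simp [Fin.ext_iff]
      constructor
      · rw [hDdef]
        simp only [submatrix_apply, hx0, hx1]
        simp only [hZdef, Matrix.sub_apply, Matrix.smul_apply, Matrix.one_apply,
          if_pos rfl]
        rw [hbt.1]
      · rw [hDdef]
        simp only [submatrix_apply, hx0, hx1]
        simp only [hZdef, Matrix.sub_apply, Matrix.smul_apply, Matrix.one_apply,
          if_neg hne, if_neg (Ne.symm hne)]
        rw [hbt.2]
        simp
    · -- zero conditions
      intro i j hij hnp
      have hcine : Fin.castSucc i ≠ Fin.castSucc j := by
        simp [Fin.ext_iff] at hij ⊢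
        exact hij
      have hnp' : ¬ ∃ t, t < ℓ ∧ ((((Fin.castSucc i : Fin (n+1)):ℕ) = 2*t ∧
          ((Fin.castSucc j : Fin (n+1)):ℕ) = 2*t+1) ∨
          (((Fin.castSucc i : Fin (n+1)):ℕ) = 2*t+1 ∧
          ((Fin.castSucc j : Fin (n+1)):ℕ) = 2*t)) := by
        simpa using hnp
      have h0 := hz (Fin.castSucc i) (Fin.castSucc j) hcine hnp'
      rw [hDdef]
      simp only [submatrix_apply]
      simp only [hZdef, Matrix.sub_apply, Matrix.smul_apply, Matrix.one_apply,
        if_neg hcine, h0]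
      simp
    · -- A = C D Cᵀ + μ 1
      ext i j
      have h1 : A i j = B (Fin.castSucc i) (Fin.castSucc j) := (hcorner i j).symm
      rw [h1, hBsplit]
      simp only [Matrix.add_apply, Matrix.smul_apply, Matrix.one_apply]
      rw [corner_conj Q Z hZcol hZrow i j]
      simp only [Fin.castSucc_inj]
      rfl
  · rintro ⟨C, D, μ, _hcontr, ⟨O, hO, hOcorner⟩, ⟨ℓ, hl, hb, hz⟩, hAeq⟩
    classical
    set Dhat := (fromBlocks D 0 0 (0 : Matrix (Fin 1) (Fin 1) ℝ)).submatrix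
      finSumFinEquiv.symm finSumFinEquiv.symm with hDhatdef
    set Sg := Matrix.diagonal (fun i => D i i) with hSgdef
    set K := D - Sg with hKdef
    have hKdiag : ∀ i, K i i = 0 := by
      intro i
      simp [hKdef, hSgdef, Matrix.sub_apply, Matrix.diagonal_apply_eq]
    have hKoff : ∀ i j, i ≠ j → K i j = D i j := by
      intro i j hij
      simp [hKdef, hSgdef, Matrix.sub_apply, Matrix.diagonal_apply_ne _ hij]
    have hKT : Kᵀ = -K := by
      ext i j
      simp only [transpose_apply, Matrix.neg_apply]
      rcases eq_or_ne i j with rfl | hij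
      · simp [hKdiag]
      · rw [hKoff j i (Ne.symm hij), hKoff i j hij]
        by_cases hp : ∃ t, t < ℓ ∧ (((i:ℕ) = 2*t ∧ (j:ℕ) = 2*t+1) ∨
            ((i:ℕ) = 2*t+1 ∧ (j:ℕ) = 2*t))
        · obtain ⟨t, ht, hd⟩ := hp
          have hi2 := i.2
          have hj2 := j.2
          have h2t : 2*t+1 < n := by rcases hd with ⟨h1, h2⟩ | ⟨h1, h2⟩ <;> omega
          have hbt := (hb t ht h2t).2
          rcases hd with ⟨h1, h2⟩ | ⟨h1, h2⟩
          · have hi : i = ⟨2*t, by omega⟩ := Fin.ext h1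
            have hj : j = ⟨2*t+1, h2t⟩ := Fin.ext h2
            rw [hi, hj] at *
            linarith [hbt]
          · have hi : i = ⟨2*t+1, h2t⟩ := Fin.ext h1
            have hj : j = ⟨2*t, by omega⟩ := Fin.ext h2
            rw [hi, hj]
            exact hbt
        · have hp2 : ¬ ∃ t, t < ℓ ∧ (((j:ℕ) = 2*t ∧ (i:ℕ) = 2*t+1) ∨
              ((j:ℕ) = 2*t+1 ∧ (i:ℕ) = 2*t)) := by
            rintro ⟨t, ht, hd⟩
            apply hp
            rcases hd with ⟨h1, h2⟩ | ⟨h1, h2⟩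
            · exact ⟨t, ht, Or.inr ⟨h2, h1⟩⟩
            · exact ⟨t, ht, Or.inl ⟨h2, h1⟩⟩
          rw [hz i j hij hp, hz j i (Ne.symm hij) hp2]
          ring
    have hcomm : Sg * K = K * Sg := by
      ext i j
      rw [hSgdef, Matrix.diagonal_mul, Matrix.mul_diagonal]
      rcases eq_or_ne i j with rfl | hij
      · ring
      · rw [hKoff i j hij]
        by_cases hp : ∃ t, t < ℓ ∧ (((i:ℕ) = 2*t ∧ (j:ℕ) = 2*t+1) ∨
            ((i:ℕ) = 2*t+1 ∧ (j:ℕ) = 2*t))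
        · obtain ⟨t, ht, hd⟩ := hp
          have hi2 := i.2
          have hj2 := j.2
          have h2t : 2*t+1 < n := by rcases hd with ⟨h1, h2⟩ | ⟨h1, h2⟩ <;> omega
          have hbt := (hb t ht h2t).1
          rcases hd with ⟨h1, h2⟩ | ⟨h1, h2⟩
          · have hi : i = ⟨2*t, by omega⟩ := Fin.ext h1
            have hj : j = ⟨2*t+1, h2t⟩ := Fin.ext h2
            rw [hi, hj, ← hbt]
            ring
          · have hi : i = ⟨2*t+1, h2t⟩ := Fin.ext h1
            have hj : j = ⟨2*t, by omega⟩ := Fin.ext h2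
            rw [hi, hj, ← hbt]
            ring
        · rw [hz i j hij hp]
          ring
    have hDnormal : Dᵀ * D = D * Dᵀ := by
      have hDSK : D = Sg + K := by rw [hKdef]; abel
      rw [hDSK]
      exact normal_of_comm Sg K (by rw [hSgdef, Matrix.diagonal_transpose]) hKT hcomm
    have hmulb : ∀ (P R : Matrix (Fin n) (Fin n) ℝ) (Y W : Matrix (Fin 1) (Fin 1) ℝ),
        (fromBlocks P 0 0 Y).submatrix finSumFinEquiv.symm finSumFinEquiv.symm *
        (fromBlocks R 0 0 W).submatrix finSumFinEquiv.symm finSumFinEquiv.symm =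
        (fromBlocks (P * R) 0 0 (Y * W)).submatrix finSumFinEquiv.symm finSumFinEquiv.symm := by
      intro P R Y W
      rw [submatrix_mul_equiv, fromBlocks_multiply]
      simp
    have hDhatT : Dhatᵀ = (fromBlocks Dᵀ 0 0 (0 : Matrix (Fin 1) (Fin 1) ℝ)).submatrix
        finSumFinEquiv.symm finSumFinEquiv.symm := by
      rw [hDhatdef, transpose_submatrix, fromBlocks_transpose]
      simp
    have hDhatnorm : Dhatᵀ * Dhat = Dhat * Dhatᵀ := by
      rw [hDhatT, hDhatdef, hmulb, hmulb, hDnormal]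
    have hOOT : O * Oᵀ = 1 := mul_eq_one_comm.mp hO
    have hcanc : ∀ W : Matrix (Fin (n+1)) (Fin (n+1)) ℝ, Oᵀ * (O * W) = W := by
      intro W
      rw [← Matrix.mul_assoc, hO, Matrix.one_mul]
    set Y := O * Dhat * Oᵀ with hYdef
    set X := O * Dhatᵀ * Oᵀ with hXdef
    set B := Y + μ • (1 : Matrix (Fin (n+1)) (Fin (n+1)) ℝ) with hBdef
    have hBT : Bᵀ = X + μ • (1 : Matrix (Fin (n+1)) (Fin (n+1)) ℝ) := by
      rw [hBdef, Matrix.transpose_add, Matrix.transpose_smul, Matrix.transpose_one,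
        hYdef, hXdef]
      congr 1
      rw [Matrix.transpose_mul, Matrix.transpose_mul, Matrix.transpose_transpose]
      simp only [Matrix.mul_assoc]
    have hXY : X * Y = Y * X := by
      have hx : X * Y = O * (Dhatᵀ * Dhat) * Oᵀ := by
        rw [hXdef, hYdef]
        simp only [Matrix.mul_assoc]
        rw [hcanc]
      have hy : Y * X = O * (Dhat * Dhatᵀ) * Oᵀ := by
        rw [hXdef, hYdef]
        simp only [Matrix.mul_assoc]
        rw [hcanc]
      rw [hx, hy, hDhatnorm]
    have hprod : ∀ (P R : Matrix (Fin (n+1)) (Fin (n+1)) ℝ),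
        (P + μ•(1 : Matrix (Fin (n+1)) (Fin (n+1)) ℝ)) * (R + μ•1)
        = P*R + (μ•P + (μ•R + (μ*μ)•(1 : Matrix (Fin (n+1)) (Fin (n+1)) ℝ))) := by
      intro P R
      rw [add_mul, mul_add, mul_add, mul_smul_comm, Matrix.mul_one, smul_mul_assoc,
        Matrix.one_mul, smul_mul_assoc, Matrix.one_mul, smul_smul]
      abel
    have hBnorm : Bᵀ * B = B * Bᵀ := by
      rw [hBT, hBdef, hprod, hprod, hXY]
      abel
    -- corner of Dhat
    have hsymmlast : finSumFinEquiv.symm (Fin.last n) = Sum.inr 0 := finSumFinEquiv_symm_last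
    have hDhcol : ∀ k, Dhat k (Fin.last n) = 0 := by
      intro k
      rw [hDhatdef, submatrix_apply, hsymmlast]
      rcases Nat.lt_or_ge (k:ℕ) n with hk | hk
      · rw [symm_low k hk]
        simp
      · rw [symm_high k hk]
        simp
    have hDhrow : ∀ k, Dhat (Fin.last n) k = 0 := by
      intro k
      rw [hDhatdef, submatrix_apply, hsymmlast]
      rcases Nat.lt_or_ge (k:ℕ) n with hk | hk
      · rw [symm_low k hk]
        simp
      · rw [symm_high k hk]
        simp
    have hDhcorner : Dhat.submatrix Fin.castSucc Fin.castSucc = D := by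
      ext i j
      rw [submatrix_apply, hDhatdef, submatrix_apply,
        symm_low (Fin.castSucc i) (by simp [i.2]), symm_low (Fin.castSucc j) (by simp [j.2])]
      simp
    have hCsub : O.submatrix Fin.castSucc Fin.castSucc = C := by
      ext i j
      rw [submatrix_apply, hOcorner]
    refine ⟨B, hBnorm, ?_⟩
    intro i j
    rw [hBdef]
    simp only [Matrix.add_apply, Matrix.smul_apply, Matrix.one_apply]
    rw [hYdef, corner_conj O Dhat hDhcol hDhrow i j, hDhcorner, hCsub, hAeq]
    simp only [Matrix.add_apply, Matrix.smul_apply, Matrix.one_apply, Fin.castSucc_inj]
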